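/- arXiv:1405.2953 — 2 statements merged into one kernel-verified Lean document; each statement's English description precedes it below -/
import Mathlib

section
/- The cluster-type change of variables z ↦ z/(x+y+1) applied to f₀ = (x+y+1)³/(xyz) + z yields f₁ = (x+y+1)²/(xyz) + z(x+y+1); applying it again to f₁ yields f₁ back up to toric change of variables, and applying it a third time yields f₀ back up to toric change of variables. -/
set_option synthInstance.maxHeartbeats 1000000
set_option maxHeartbeats 2000000


/-- The field `ℂ(x,y,z)` of rational functions in three variables. -/
abbrev K3 := FractionRing (MvPolynomial (Fin 3) ℂ)

/-- The coordinate functions `x, y, z` in `ℂ(x,y,z)`. -/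
noncomputable def Xv (i : Fin 3) : K3 := algebraMap (MvPolynomial (Fin 3) ℂ) K3 (MvPolynomial.X i)

/-- The monomial in `x, y, z` with exponent vector given by the `i`-th row of an
integer matrix `M`; substituting these monomials for the variables is the toric change
of variables attached to `M ∈ GL(3,ℤ)`. -/
noncomputable def toricMono (M : Matrix (Fin 3) (Fin 3) ℤ) (i : Fin 3) : K3 :=
  Xv 0 ^ M i 0 * Xv 1 ^ M i 1 * Xv 2 ^ M i 2

/-- `f₀ = (x+y+1)³/(xyz) + z`, the Hori–Vafa weak LG model of the cubic threefold. -/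
noncomputable def F₀ (x y z : K3) : K3 := (x + y + 1) ^ 3 / (x * y * z) + z

/-- `f₁ = (x+y+1)²/(xyz) + z(x+y+1)`. -/
noncomputable def F₁ (x y z : K3) : K3 := (x + y + 1) ^ 2 / (x * y * z) + z * (x + y + 1)

/-- The result `(x+y+1)/(xyz) + z(x+y+1)²` of applying the change of variables to `f₁`. -/
noncomputable def G₂ (x y z : K3) : K3 := (x + y + 1) / (x * y * z) + z * (x + y + 1) ^ 2

lemma Xv_ne_zero (i : Fin 3) : Xv i ≠ 0 := by
  simp [Xv, IsFractionRing.to_map_eq_zero_iff, MvPolynomial.X_ne_zero]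

lemma s_ne_zero : Xv 0 + Xv 1 + 1 ≠ 0 := by
  have : Xv 0 + Xv 1 + 1 =
      algebraMap (MvPolynomial (Fin 3) ℂ) K3 (MvPolynomial.X 0 + MvPolynomial.X 1 + 1) := by
    simp [Xv]
  rw [this, Ne, IsFractionRing.to_map_eq_zero_iff]
  intro h
  have := congrArg (MvPolynomial.eval (0 : Fin 3 → ℂ)) h
  simp at this

/-- the cluster-type change of variables `z ↦ z/(x+y+1)` (substituting
`z(x+y+1)` for `z`) transforms `f₀` into `f₁`; applying it again to `f₁` yields `f₁`
back up to a toric change of variables; and applying it a third time yields `f₀` back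
up to a toric change of variables. -/
theorem cubic_cluster_transformation :
    F₀ (Xv 0) (Xv 1) (Xv 2 * (Xv 0 + Xv 1 + 1)) = F₁ (Xv 0) (Xv 1) (Xv 2) ∧
      (F₁ (Xv 0) (Xv 1) (Xv 2 * (Xv 0 + Xv 1 + 1)) = G₂ (Xv 0) (Xv 1) (Xv 2) ∧
        ∃ M : Matrix (Fin 3) (Fin 3) ℤ, IsUnit M.det ∧
          G₂ (Xv 0) (Xv 1) (Xv 2) =
            F₁ (toricMono M 0) (toricMono M 1) (toricMono M 2)) ∧
      ∃ M : Matrix (Fin 3) (Fin 3) ℤ, IsUnit M.det ∧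
        G₂ (Xv 0) (Xv 1) (Xv 2 * (Xv 0 + Xv 1 + 1)) =
          F₀ (toricMono M 0) (toricMono M 1) (toricMono M 2) := by
  have hx := Xv_ne_zero 0
  have hy := Xv_ne_zero 1
  have hz := Xv_ne_zero 2
  have hs := s_ne_zero
  have hdet : IsUnit (!![(1:ℤ),0,0;0,1,0;-1,-1,-1]).det := by
    rw [Matrix.det_fin_three]
    simp [Matrix.cons_val]
  have hm0 : toricMono !![(1:ℤ),0,0;0,1,0;-1,-1,-1] 0 = Xv 0 := by
    simp [toricMono]
  have hm1 : toricMono !![(1:ℤ),0,0;0,1,0;-1,-1,-1] 1 = Xv 1 := by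
    simp [toricMono]
  have hm2 : toricMono !![(1:ℤ),0,0;0,1,0;-1,-1,-1] 2 = (Xv 0)⁻¹ * (Xv 1)⁻¹ * (Xv 2)⁻¹ := by
    simp [toricMono]
  refine ⟨?_, ⟨?_, !![(1:ℤ),0,0;0,1,0;-1,-1,-1], hdet, ?_⟩,
    !![(1:ℤ),0,0;0,1,0;-1,-1,-1], hdet, ?_⟩
  · unfold F₀ F₁
    field_simp
  · unfold F₁ G₂
    field_simp
  · rw [hm0, hm1, hm2]
    unfold F₁ G₂
    field_simp
    ring
  · rw [hm0, hm1, hm2]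
    unfold F₀ G₂
    field_simp
    ring
end

section
/- For all i ≥ 0, the Laurent polynomials f₀ = (x+y+1)³/(xyz) + z and f₁ = (x+y+1)²/(xyz) + z(x+y+1) have equal constant terms of their i-th powers: the constant term of f₀^i equals the constant term of f₁^i. -/
/-- The ring of Laurent polynomials `ℂ[x^{±1}, y^{±1}, z^{±1}]`. -/
abbrev L3 := AddMonoidAlgebra ℂ (Fin 3 → ℤ)

/-- The monomial `x^a y^b z^c`. -/
noncomputable def mono (a b c : ℤ) : L3 := AddMonoidAlgebra.single ![a, b, c] 1

/-- `f₀ = (x+y+1)³/(xyz) + z`. -/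
noncomputable def f₀ : L3 := (mono 1 0 0 + mono 0 1 0 + 1) ^ 3 * mono (-1) (-1) (-1) + mono 0 0 1

/-- `f₁ = (x+y+1)²/(xyz) + z(x+y+1)`. -/
noncomputable def f₁ : L3 :=
  (mono 1 0 0 + mono 0 1 0 + 1) ^ 2 * mono (-1) (-1) (-1) +
    mono 0 0 1 * (mono 1 0 0 + mono 0 1 0 + 1)

/-- The constant term: the coefficient at `x⁰y⁰z⁰`. -/
def constantTerm (f : L3) : ℂ := f.coeff 0

lemma L3_add_apply (f g : L3) (v : Fin 3 → ℤ) : (f + g).coeff v = f.coeff v + g.coeff v := rfl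

lemma L3_single_apply (u v : Fin 3 → ℤ) (c : ℂ) :
    (AddMonoidAlgebra.single u c : L3).coeff v = if u = v then c else 0 := Finsupp.single_apply

noncomputable def PP : L3 := mono 1 0 0 + mono 0 1 0 + 1

lemma zsupp_mul {f g : L3} (hf : ∀ v : Fin 3 → ℤ, v 2 ≠ 0 → f.coeff v = 0)
    (hg : ∀ v : Fin 3 → ℤ, v 2 ≠ 0 → g.coeff v = 0) :
    ∀ v : Fin 3 → ℤ, v 2 ≠ 0 → (f * g).coeff v = 0 := by
  intro v hv
  rw [AddMonoidAlgebra.coeff_mul]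
  apply Finset.sum_eq_zero
  intro v1 h1
  apply Finset.sum_eq_zero
  intro v2 h2
  by_cases hv1 : v1 2 = 0
  · by_cases hv2 : v2 2 = 0
    · have : v1 + v2 ≠ v := by
        intro h
        apply hv
        rw [← h]
        simp [hv1, hv2]
      simp [this]
    · rw [hg v2 hv2]
      simp
  · rw [hf v1 hv1]
    simp

lemma PP_zsupp (j : ℕ) : ∀ v : Fin 3 → ℤ, v 2 ≠ 0 → (PP ^ j).coeff v = 0 := by
  induction j with
  | zero =>
    intro v hv
    have hvne : v ≠ 0 := fun h => hv (by simp [h])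
    simp [pow_zero, AddMonoidAlgebra.one_def, Finsupp.single_apply, hvne.symm]
  | succ n ih =>
    rw [pow_succ]
    apply zsupp_mul ih
    intro v hv
    have h1 : v ≠ ![1,0,0] := fun h => hv (by simp [h])
    have h2 : v ≠ ![0,1,0] := fun h => hv (by simp [h])
    have h3 : v ≠ 0 := fun h => hv (by simp [h])
    simp [PP, mono, AddMonoidAlgebra.one_def, L3_add_apply,
      L3_single_apply, Ne.symm h1, Ne.symm h2, Ne.symm h3, h1, h2, h3]

lemma key (e : ℕ) (w : Fin 3 → ℤ) (c : ℂ) :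
    (PP ^ e * AddMonoidAlgebra.single w c).coeff 0 = (PP ^ e).coeff (-w) * c := by
  rw [AddMonoidAlgebra.coeff_mul_single_apply, zero_add]

/-- for every `i ≥ 0`, the constant term of `f₀^i` equals the constant
term of `f₁^i`. -/
theorem cubic_constant_terms_agree (i : ℕ) :
    constantTerm (f₀ ^ i) = constantTerm (f₁ ^ i) := by
  have hf0 : f₀ = PP ^ 3 * mono (-1) (-1) (-1) + mono 0 0 1 := rfl
  have hf1 : f₁ = PP ^ 2 * mono (-1) (-1) (-1) + mono 0 0 1 * PP := rfl
  rw [constantTerm, constantTerm, hf0, hf1, add_pow, add_pow,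
    AddMonoidAlgebra.coeff_sum, AddMonoidAlgebra.coeff_sum, Finsupp.finset_sum_apply, Finsupp.finset_sum_apply]
  apply Finset.sum_congr rfl
  intro k hk
  have hk' : k ≤ i := Nat.lt_succ_iff.mp (Finset.mem_range.mp hk)
  have hm : (mono (-1) (-1) (-1) : L3) ^ k = AddMonoidAlgebra.single (k • ![(-1:ℤ),-1,-1]) 1 := by
    rw [mono, AddMonoidAlgebra.single_pow, one_pow]
  have hz : (mono 0 0 1 : L3) ^ (i - k) = AddMonoidAlgebra.single ((i-k) • ![(0:ℤ),0,1]) 1 := by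
    rw [mono, AddMonoidAlgebra.single_pow, one_pow]
  have hc : ((i.choose k : ℕ) : L3) = AddMonoidAlgebra.single 0 ((i.choose k : ℂ)) :=
    AddMonoidAlgebra.natCast_def _
  have hsingle : ∀ (u v : Fin 3 → ℤ) (a b : ℂ),
      AddMonoidAlgebra.single u a * AddMonoidAlgebra.single v b = (AddMonoidAlgebra.single (u+v) (a*b) : L3) :=
    fun u v a b => AddMonoidAlgebra.single_mul_single u v a b
  have rearr0 : ∀ A s1 s2 s3 : L3, (A*s1)*s2*s3 = A*(s1*s2*s3) := by intros; ring
  have rearr1 : ∀ A B s1 s2 s3 : L3, (A*s1)*(s2*B)*s3 = (A*B)*(s1*s2*s3) := by intros; ring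
  set w : Fin 3 → ℤ := k • ![(-1:ℤ),-1,-1] + (i-k) • ![(0:ℤ),0,1] with hw
  have E0 : (PP^3 * mono (-1) (-1) (-1))^k * (mono 0 0 1)^(i-k) * ((i.choose k : ℕ) : L3)
      = PP^(3*k) * AddMonoidAlgebra.single w ((i.choose k : ℂ)) := by
    rw [mul_pow, hm, hz, hc, ← pow_mul, rearr0, hsingle, hsingle, one_mul, one_mul, add_zero]
  have E1 : (PP^2 * mono (-1) (-1) (-1))^k * (mono 0 0 1 * PP)^(i-k) * ((i.choose k : ℕ) : L3)
      = PP^(2*k+(i-k)) * AddMonoidAlgebra.single w ((i.choose k : ℂ)) := by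
    rw [mul_pow, mul_pow, hm, hz, hc, ← pow_mul, rearr1, ← pow_add, hsingle, hsingle,
      one_mul, one_mul, add_zero]
  rw [E0, E1, key, key]
  by_cases h2 : 2 * k = i
  · have : 2*k+(i-k) = 3*k := by omega
    rw [this]
  · have hne : (-w) 2 ≠ 0 := by
      have : (-w) 2 = (k:ℤ) * 2 - i := by
        simp [hw]
        rw [Nat.cast_sub hk']
        ring
      rw [this]
      omega
    rw [PP_zsupp _ _ hne, PP_zsupp _ _ hne]
end
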